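/- For each β ∈ {It, Sd}: there exists a class ℒ of recursive languages such that ℒ ∈ [τ(CInd)TxtβEx_C]_REC but ℒ ∉ [TxtTdEx_W]_REC; that is, some partial computable β-learner that outputs only C-indices on all inputs Ex_C-learns every member of ℒ, but no partial computable transductive learner Ex_W-learns every member of ℒ. -/

import Mathlib

namespace InductiveInference

/-- `φ_e` : the `e`-th partial computable function, via the standard numbering
of `Nat.Partrec.Code`. -/
def phi (e : ℕ) : ℕ →. ℕ := (Denumerable.ofNat Nat.Partrec.Code e).eval

/-- `W_e` : the domain of `φ_e`. -/
def Wset (e : ℕ) : Set ℕ := (phi e).Dom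

/-- `e` is a C-index: `φ_e` is total with values in `{0,1}`. -/
def CIndex (e : ℕ) : Prop := ∀ x, phi e x = Part.some 0 ∨ phi e x = Part.some 1

/-- `C_e = {x | φ_e x = 1}`. -/
def Cset (e : ℕ) : Set ℕ := {x | phi e x = Part.some 1}

/-- A language is recursive (decidable). -/
def RecLang (L : Set ℕ) : Prop := ∃ f : ℕ → Bool, Computable f ∧ ∀ x, x ∈ L ↔ f x = true

/-- Texts: total functions `ℕ → ℕ ∪ {#}`; `none` is the pause symbol `#`. -/
abbrev Text := ℕ → Option ℕ

/-- The content of a text: its range minus the pause symbol. -/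
def content (T : Text) : Set ℕ := {x | ∃ n, T n = some x}

/-- The initial segment `T[n] = (T 0, …, T (n-1))`. -/
def initSeg (T : Text) (n : ℕ) : List (Option ℕ) := (List.range n).map T

/-- The (finite) content of the initial segment `T[n]`. -/
def fincontent (T : Text) (n : ℕ) : Finset ℕ := ((initSeg T n).filterMap id).toFinset

/-- A canonical numerical code for a finite set of naturals. -/
def setCode (D : Finset ℕ) : ℕ := Encodable.encode (D.sort (· ≤ ·))

/-- Learners: partial functions on (suitably coded) natural number inputs. -/
abbrev Learner := ℕ →. ℕ

/-- The learner is partial computable. -/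
def PartComputable (h : Learner) : Prop := Nat.Partrec h

/-- The learner is total computable. -/
def TotalComputable (h : Learner) : Prop := Nat.Partrec h ∧ ∀ x, (h x).Dom

/-- Hypothesis sequences (possibly undefined at some points). -/
abbrev HypSeq := ℕ → Part ℕ

/-- Gold-style (full-information) learning: `G(h,T)(i) = h(T[i])`. -/
def Gop (h : Learner) (T : Text) (i : ℕ) : Part ℕ :=
  h (Encodable.encode (initSeg T i))

/-- Partially set-driven learning: `Psd(h,T)(i) = h(content T[i], i)`. -/
def Psdop (h : Learner) (T : Text) (i : ℕ) : Part ℕ :=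
  h (Nat.pair (setCode (fincontent T i)) i)

/-- Set-driven learning: `Sd(h,T)(i) = h(content T[i])`. -/
def Sdop (h : Learner) (T : Text) (i : ℕ) : Part ℕ :=
  h (setCode (fincontent T i))

/-- Iterative learning: the input `none` codes the empty start sequence `ε`,
and `some (e, x)` codes the pair of previous hypothesis `e` and datum `x`. -/
def Itop (h : Learner) (T : Text) : ℕ → Part ℕ
  | 0 => h (Encodable.encode (none : Option (ℕ × Option ℕ)))
  | i + 1 => (Itop h T i).bind fun e =>
      h (Encodable.encode (some (e, T i) : Option (ℕ × Option ℕ)))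

/-- Transductive learning: the learner receives the single (coded) datum
`T i`; the output `0` codes the distinguished symbol `?`, and the output
`e + 1` codes the hypothesis `e`.  The value `?` of the hypothesis sequence
is represented by `Part.none`. -/
def Tdop (h : Learner) (T : Text) : ℕ → Part ℕ
  | 0 => Part.none
  | i + 1 => (h (Encodable.encode (T i))).bind fun v =>
      match v with
      | 0 => Tdop h T i
      | e + 1 => Part.some e

/-- `Ex_C`: syntactic convergence to a single correct C-index. -/
def ExC (p : HypSeq) (T : Text) : Prop :=
  ∃ n₀, (∀ n, n₀ ≤ n → p n = p n₀) ∧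
    ∃ e, p n₀ = Part.some e ∧ CIndex e ∧ Cset e = content T

/-- `Ex_W`: syntactic convergence to a single correct W-index. -/
def ExW (p : HypSeq) (T : Text) : Prop :=
  ∃ n₀, (∀ n, n₀ ≤ n → p n = p n₀) ∧
    ∃ e, p n₀ = Part.some e ∧ Wset e = content T

/-- `Bc_C`: semantic convergence to correct C-indices. -/
def BcC (p : HypSeq) (T : Text) : Prop :=
  ∃ n₀, ∀ n, n₀ ≤ n → ∃ e, p n = Part.some e ∧ CIndex e ∧ Cset e = content T

/-- `Bc_W`: semantic convergence to correct W-indices. -/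
def BcW (p : HypSeq) (T : Text) : Prop :=
  ∃ n₀, ∀ n, n₀ ≤ n → ∃ e, p n = Part.some e ∧ Wset e = content T

/-- `CInd`: every hypothesis output is a C-index. -/
def CIndRes (p : HypSeq) (_T : Text) : Prop :=
  ∀ i e, p i = Part.some e → CIndex e

/-- `T`: the always-true restriction. -/
def TrueRes (_p : HypSeq) (_T : Text) : Prop := True

abbrev InteractionOp := Learner → Text → HypSeq
abbrev Restriction := HypSeq → Text → Prop

/-- Conjunction of restrictions. -/
def andRes (δ δ' : Restriction) : Restriction := fun p T => δ p T ∧ δ' p T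

/-- `h` `Txtβδ`-learns `L`: on every text for `L` the restriction `δ` holds. -/
def Learns (β : InteractionOp) (δ : Restriction) (h : Learner) (L : Set ℕ) : Prop :=
  ∀ T : Text, content T = L → δ (β h T) T

/-- The restriction `α` holds for `h` on all texts whatsoever. -/
def OnAllTexts (β : InteractionOp) (α : Restriction) (h : Learner) : Prop :=
  ∀ T : Text, α (β h T) T

/-- A class of recursive languages. -/
def IsRecClass (ℒ : Set (Set ℕ)) : Prop := ∀ L ∈ ℒ, RecLang L

/-- `[𝒞Txtβδ]_REC`: classes of recursive languages learnable by some
learner from `C` under interaction operator `β` and restriction `δ`. -/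
def LearnableREC (C : Learner → Prop) (β : InteractionOp) (δ : Restriction) :
    Set (Set (Set ℕ)) :=
  {ℒ | IsRecClass ℒ ∧ ∃ h, C h ∧ ∀ L ∈ ℒ, Learns β δ h L}

/-- `[τ(α)𝒞Txtβδ]_REC`: as above, where additionally `α` must hold on
arbitrary texts. -/
def TauLearnableREC (C : Learner → Prop) (α : Restriction) (β : InteractionOp)
    (δ : Restriction) : Set (Set (Set ℕ)) :=
  {ℒ | IsRecClass ℒ ∧ ∃ h, C h ∧ OnAllTexts β α h ∧ ∀ L ∈ ℒ, Learns β δ h L}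

/-! ### Auxiliary development for the proof -/

section AuxProof

lemma exists_index {f : ℕ → ℕ} (hf : Computable f) :
    ∃ e, ∀ x, phi e x = Part.some (f x) := by
  have h1 : Nat.Partrec (f : ℕ →. ℕ) := Partrec.nat_iff.mp hf
  obtain ⟨c, hc⟩ := Nat.Partrec.Code.exists_code.mp h1
  refine ⟨Encodable.encode c, fun x => ?_⟩
  simp only [phi, Denumerable.ofNat_encode, hc]
  rfl

/-- A quadruple of C-indices for `∅`, `{0}`, `{1}`, `{0,1}`. -/
structure Quad where
  eE : ℕ
  e0 : ℕ
  e1 : ℕ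
  e01 : ℕ
  hE : ∀ x, phi eE x = Part.some 0
  h0 : ∀ x, phi e0 x = Part.some (if x = 0 then 1 else 0)
  h1 : ∀ x, phi e1 x = Part.some (if x = 1 then 1 else 0)
  h01 : ∀ x, phi e01 x = Part.some (if x ≤ 1 then 1 else 0)

lemma quad_exists : Nonempty Quad := by
  obtain ⟨eE, hE⟩ := exists_index (f := fun _ => 0) (Computable.const 0)
  obtain ⟨e0, h0⟩ := exists_index (f := fun x => if x = 0 then 1 else 0)
    ((Primrec.ite (Primrec.eq.comp .id (.const 0)) (.const 1) (.const 0)).to_comp)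
  obtain ⟨e1, h1⟩ := exists_index (f := fun x => if x = 1 then 1 else 0)
    ((Primrec.ite (Primrec.eq.comp .id (.const 1)) (.const 1) (.const 0)).to_comp)
  obtain ⟨e01, h01⟩ := exists_index (f := fun x => if x ≤ 1 then 1 else 0)
    ((Primrec.ite (Primrec.nat_le.comp .id (.const 1)) (.const 1) (.const 0)).to_comp)
  exact ⟨⟨eE, e0, e1, e01, hE, h0, h1, h01⟩⟩

namespace Quad
variable (q : Quad)

lemma cindE : CIndex q.eE := fun x => Or.inl (q.hE x)
lemma cind0 : CIndex q.e0 := fun x => by rw [q.h0]; split_ifs <;> simp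
lemma cind1 : CIndex q.e1 := fun x => by rw [q.h1]; split_ifs <;> simp
lemma cind01 : CIndex q.e01 := fun x => by rw [q.h01]; split_ifs <;> simp

lemma cset0 : Cset q.e0 = {0} := by
  ext x; simp only [Cset, Set.mem_setOf_eq, q.h0, Part.some_inj, Set.mem_singleton_iff]
  split_ifs with h <;> simp [h]
lemma cset1 : Cset q.e1 = {1} := by
  ext x; simp only [Cset, Set.mem_setOf_eq, q.h1, Part.some_inj, Set.mem_singleton_iff]
  split_ifs with h <;> simp [h]
lemma cset01 : Cset q.e01 = {0, 1} := by
  ext x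
  simp only [Cset, Set.mem_setOf_eq, q.h01, Part.some_inj, Set.mem_insert_iff,
    Set.mem_singleton_iff]
  split_ifs with h <;> simp <;> omega

lemma ne_E_0 : q.eE ≠ q.e0 := by
  intro h; have h' := q.hE 0; rw [h, q.h0] at h'; simp at h'
lemma ne_E_1 : q.eE ≠ q.e1 := by
  intro h; have h' := q.hE 1; rw [h, q.h1] at h'; simp at h'
lemma ne_E_01 : q.eE ≠ q.e01 := by
  intro h; have h' := q.hE 0; rw [h, q.h01] at h'; simp at h'
lemma ne_0_1 : q.e0 ≠ q.e1 := by
  intro h; have h' := q.h0 0; rw [h, q.h1] at h'; simp at h'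
lemma ne_0_01 : q.e0 ≠ q.e01 := by
  intro h; have h' := q.h0 1; rw [h, q.h01] at h'; simp at h'
lemma ne_1_01 : q.e1 ≠ q.e01 := by
  intro h; have h' := q.h1 0; rw [h, q.h01] at h'; simp at h'

end Quad

/-- The transition function of the iterative learner. -/
def stepFn (q : Quad) (e x : ℕ) : ℕ :=
  if e = q.e01 then q.e01
  else if x = 0 then (if e = q.e1 then q.e01 else q.e0)
  else if x = 1 then (if e = q.e0 then q.e01 else q.e1)
  else q.e01

/-- The iterative learner, as a total function on codes. -/
def itFn (q : Quad) (n : ℕ) : ℕ :=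
  if n = 0 then q.eE
  else if (n - 1).unpair.2 = 0 then (n - 1).unpair.1
  else stepFn q (n - 1).unpair.1 ((n - 1).unpair.2 - 1)

lemma itFn_computable (q : Quad) : Computable (itFn q) := by
  have p1 : Primrec (fun n : ℕ => (n - 1).unpair.1) :=
    Primrec.fst.comp (Primrec.unpair.comp Primrec.pred)
  have p2 : Primrec (fun n : ℕ => (n - 1).unpair.2) :=
    Primrec.snd.comp (Primrec.unpair.comp Primrec.pred)
  have p3 : Primrec (fun n : ℕ => (n - 1).unpair.2 - 1) := Primrec.pred.comp p2
  have pstep : Primrec (fun n : ℕ => stepFn q ((n - 1).unpair.1) ((n - 1).unpair.2 - 1)) := by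
    simp only [stepFn]
    exact Primrec.ite (Primrec.eq.comp p1 (.const q.e01)) (.const q.e01)
      (Primrec.ite (Primrec.eq.comp p3 (.const 0))
        (Primrec.ite (Primrec.eq.comp p1 (.const q.e1)) (.const q.e01) (.const q.e0))
        (Primrec.ite (Primrec.eq.comp p3 (.const 1))
          (Primrec.ite (Primrec.eq.comp p1 (.const q.e0)) (.const q.e01) (.const q.e1))
          (.const q.e01)))
  exact Primrec.to_comp <| Primrec.ite (Primrec.eq.comp .id (.const 0)) (.const q.eE)
    (Primrec.ite (Primrec.eq.comp p2 (.const 0)) p1 pstep)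

/-- The iterative learner. -/
def itL (q : Quad) : Learner := fun n => Part.some (itFn q n)

lemma itL_pc (q : Quad) : PartComputable (itL q) :=
  Partrec.nat_iff.mp (itFn_computable q)

lemma itFn_encode_none (q : Quad) :
    itFn q (Encodable.encode (none : Option (ℕ × Option ℕ))) = q.eE := rfl

lemma itFn_encode_pause (q : Quad) (e : ℕ) :
    itFn q (Encodable.encode (some (e, none) : Option (ℕ × Option ℕ))) = e := by
  show itFn q (Nat.pair e 0 + 1) = e
  simp [itFn, Nat.unpair_pair]

lemma itFn_encode_some (q : Quad) (e x : ℕ) :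
    itFn q (Encodable.encode (some (e, some x) : Option (ℕ × Option ℕ))) = stepFn q e x := by
  show itFn q (Nat.pair e (x + 1) + 1) = stepFn q e x
  simp [itFn, Nat.unpair_pair]

/-- The state of the iterative learner along a text. -/
def itSt (q : Quad) (T : Text) : ℕ → ℕ
  | 0 => q.eE
  | i + 1 =>
    match T i with
    | none => itSt q T i
    | some x => stepFn q (itSt q T i) x

lemma itop_eq (q : Quad) (T : Text) : ∀ i, Itop (itL q) T i = Part.some (itSt q T i) := by
  intro i
  induction i with
  | zero =>
    show itL q _ = _
    rw [itL, itFn_encode_none]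
    rfl
  | succ i ih =>
    show (Itop (itL q) T i).bind _ = _
    rw [ih, Part.bind_some]
    show itL q _ = _
    cases hTi : T i with
    | none => rw [itL, itFn_encode_pause]; simp [itSt, hTi]
    | some x => rw [itL, itFn_encode_some]; simp [itSt, hTi]

lemma stepFn_mem (q : Quad) (e x : ℕ) :
    stepFn q e x = q.e0 ∨ stepFn q e x = q.e1 ∨ stepFn q e x = q.e01 := by
  unfold stepFn; split_ifs <;> simp

lemma stepFn_zero_mem (q : Quad) (e : ℕ) :
    stepFn q e 0 = q.e0 ∨ stepFn q e 0 = q.e01 := by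
  unfold stepFn; split_ifs <;> simp_all

lemma stepFn_one_mem (q : Quad) (e : ℕ) :
    stepFn q e 1 = q.e1 ∨ stepFn q e 1 = q.e01 := by
  unfold stepFn; split_ifs <;> simp_all

lemma stepFn_e01 (q : Quad) (x : ℕ) : stepFn q q.e01 x = q.e01 := by simp [stepFn]

lemma stepFn_eE_zero (q : Quad) : stepFn q q.eE 0 = q.e0 := by
  simp [stepFn, q.ne_E_01, q.ne_E_1]
lemma stepFn_e0_zero (q : Quad) : stepFn q q.e0 0 = q.e0 := by
  simp [stepFn, q.ne_0_01, q.ne_0_1]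
lemma stepFn_eE_one (q : Quad) : stepFn q q.eE 1 = q.e1 := by
  simp [stepFn, q.ne_E_01, q.ne_E_0]
lemma stepFn_e1_one (q : Quad) : stepFn q q.e1 1 = q.e1 := by
  simp [stepFn, q.ne_1_01, (Ne.symm q.ne_0_1)]
lemma stepFn_e0_one (q : Quad) : stepFn q q.e0 1 = q.e01 := by
  simp [stepFn, q.ne_0_01]

lemma itSt_mem (q : Quad) (T : Text) (i : ℕ) :
    itSt q T i = q.eE ∨ itSt q T i = q.e0 ∨ itSt q T i = q.e1 ∨ itSt q T i = q.e01 := by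
  induction i with
  | zero => left; rfl
  | succ i ih =>
    cases hTi : T i with
    | none => simpa [itSt, hTi] using ih
    | some x =>
      simp only [itSt, hTi]
      rcases stepFn_mem q (itSt q T i) x with h | h | h <;> simp [h]

lemma it_cindres (q : Quad) : OnAllTexts Itop CIndRes (itL q) := by
  intro T i e hie
  rw [itop_eq q T i, Part.some_inj] at hie
  subst hie
  rcases itSt_mem q T i with h | h | h | h <;> rw [h]
  exacts [q.cindE, q.cind0, q.cind1, q.cind01]

end AuxProof

section AuxProof2

lemma it_learns0 (q : Quad) : Learns Itop ExC (itL q) {0} := by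
  intro T hc
  have hdat : ∀ i x, T i = some x → x = 0 := fun i x h => by
    have : x ∈ content T := ⟨i, h⟩
    rwa [hc] at this
  obtain ⟨m, hm⟩ : ∃ m, T m = some 0 := by
    have : (0 : ℕ) ∈ content T := by rw [hc]; rfl
    exact this
  have inv : ∀ i, itSt q T i = q.eE ∨ itSt q T i = q.e0 := by
    intro i
    induction i with
    | zero => left; rfl
    | succ i ih =>
      cases hTi : T i with
      | none => simpa [itSt, hTi] using ih
      | some x =>
        have hx := hdat i x hTi; subst hx
        simp only [itSt, hTi]
        rcases ih with h | h <;> rw [h] <;> right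
        exacts [stepFn_eE_zero q, stepFn_e0_zero q]
  have conv : ∀ i, m < i → itSt q T i = q.e0 := by
    intro i hi
    induction i with
    | zero => omega
    | succ i ih =>
      rcases Nat.lt_succ_iff_lt_or_eq.mp hi with h' | h'
      · have hsi := ih h'
        cases hTi : T i with
        | none => simpa [itSt, hTi] using hsi
        | some x =>
          have hx := hdat i x hTi; subst hx
          simp only [itSt, hTi, hsi, stepFn_e0_zero]
      · subst h'
        simp only [itSt, hm]
        rcases inv m with h | h <;> rw [h]
        exacts [stepFn_eE_zero q, stepFn_e0_zero q]
  refine ⟨m + 1, ?_, q.e0, ?_, q.cind0, ?_⟩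
  · intro n hn
    rw [itop_eq, itop_eq, conv n (by omega), conv (m + 1) (by omega)]
  · rw [itop_eq, conv (m + 1) (by omega)]
  · rw [q.cset0, hc]

lemma it_learns1 (q : Quad) : Learns Itop ExC (itL q) {1} := by
  intro T hc
  have hdat : ∀ i x, T i = some x → x = 1 := fun i x h => by
    have : x ∈ content T := ⟨i, h⟩
    rwa [hc] at this
  obtain ⟨m, hm⟩ : ∃ m, T m = some 1 := by
    have : (1 : ℕ) ∈ content T := by rw [hc]; rfl
    exact this
  have inv : ∀ i, itSt q T i = q.eE ∨ itSt q T i = q.e1 := by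
    intro i
    induction i with
    | zero => left; rfl
    | succ i ih =>
      cases hTi : T i with
      | none => simpa [itSt, hTi] using ih
      | some x =>
        have hx := hdat i x hTi; subst hx
        simp only [itSt, hTi]
        rcases ih with h | h <;> rw [h] <;> right
        exacts [stepFn_eE_one q, stepFn_e1_one q]
  have conv : ∀ i, m < i → itSt q T i = q.e1 := by
    intro i hi
    induction i with
    | zero => omega
    | succ i ih =>
      rcases Nat.lt_succ_iff_lt_or_eq.mp hi with h' | h'
      · have hsi := ih h'
        cases hTi : T i with
        | none => simpa [itSt, hTi] using hsi
        | some x =>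
          have hx := hdat i x hTi; subst hx
          simp only [itSt, hTi, hsi, stepFn_e1_one]
      · subst h'
        simp only [itSt, hm]
        rcases inv m with h | h <;> rw [h]
        exacts [stepFn_eE_one q, stepFn_e1_one q]
  refine ⟨m + 1, ?_, q.e1, ?_, q.cind1, ?_⟩
  · intro n hn
    rw [itop_eq, itop_eq, conv n (by omega), conv (m + 1) (by omega)]
  · rw [itop_eq, conv (m + 1) (by omega)]
  · rw [q.cset1, hc]

lemma it_learns01 (q : Quad) : Learns Itop ExC (itL q) {0, 1} := by
  intro T hc
  have hdat : ∀ i x, T i = some x → x = 0 ∨ x = 1 := fun i x h => by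
    have : x ∈ content T := ⟨i, h⟩
    rwa [hc] at this
  obtain ⟨m0, hm0⟩ : ∃ m, T m = some 0 := by
    have : (0 : ℕ) ∈ content T := by rw [hc]; left; rfl
    exact this
  obtain ⟨m1, hm1⟩ : ∃ m, T m = some 1 := by
    have : (1 : ℕ) ∈ content T := by rw [hc]; right; rfl
    exact this
  have inv0 : ∀ i, m0 < i → (itSt q T i = q.e0 ∨ itSt q T i = q.e01) := by
    intro i hi
    induction i with
    | zero => omega
    | succ i ih =>
      rcases Nat.lt_succ_iff_lt_or_eq.mp hi with h' | h'
      · have hsi := ih h'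
        cases hTi : T i with
        | none => simpa [itSt, hTi] using hsi
        | some x =>
          simp only [itSt, hTi]
          rcases hdat i x hTi with rfl | rfl
          · exact stepFn_zero_mem q _
          · rcases hsi with h | h <;> rw [h]
            · right; exact stepFn_e0_one q
            · right; exact stepFn_e01 q 1
      · subst h'
        simp only [itSt, hm0]
        exact stepFn_zero_mem q _
  have inv1 : ∀ i, m1 < i → (itSt q T i = q.e1 ∨ itSt q T i = q.e01) := by
    intro i hi
    induction i with
    | zero => omega
    | succ i ih =>
      rcases Nat.lt_succ_iff_lt_or_eq.mp hi with h' | h'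
      · have hsi := ih h'
        cases hTi : T i with
        | none => simpa [itSt, hTi] using hsi
        | some x =>
          simp only [itSt, hTi]
          rcases hdat i x hTi with rfl | rfl
          · rcases hsi with h | h <;> rw [h]
            · right
              show stepFn q q.e1 0 = q.e01
              simp [stepFn, q.ne_1_01]
            · right; exact stepFn_e01 q 0
          · exact stepFn_one_mem q _
      · subst h'
        simp only [itSt, hm1]
        exact stepFn_one_mem q _
  have conv : ∀ i, max m0 m1 < i → itSt q T i = q.e01 := by
    intro i hi
    rcases inv0 i (by omega) with h | h
    · rcases inv1 i (by omega) with h2 | h2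
      · exact absurd (h.symm.trans h2) q.ne_0_1
      · exact h2
    · exact h
  refine ⟨max m0 m1 + 1, ?_, q.e01, ?_, q.cind01, ?_⟩
  · intro n hn
    rw [itop_eq, itop_eq, conv n (by omega), conv (max m0 m1 + 1) (by omega)]
  · rw [itop_eq, conv (max m0 m1 + 1) (by omega)]
  · rw [q.cset01, hc]

end AuxProof2

section AuxProof3

/-- The set-driven learner, as a total function on codes. -/
def sdFn (q : Quad) (n : ℕ) : ℕ :=
  if n = setCode {0} then q.e0
  else if n = setCode {1} then q.e1
  else if n = setCode ∅ then q.eE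
  else q.e01

/-- The set-driven learner. -/
def sdL (q : Quad) : Learner := fun n => Part.some (sdFn q n)

lemma sdFn_computable (q : Quad) : Computable (sdFn q) := by
  exact Primrec.to_comp <|
    Primrec.ite (Primrec.eq.comp .id (.const (setCode {0}))) (.const q.e0)
      (Primrec.ite (Primrec.eq.comp .id (.const (setCode {1}))) (.const q.e1)
        (Primrec.ite (Primrec.eq.comp .id (.const (setCode ∅))) (.const q.eE) (.const q.e01)))

lemma sdL_pc (q : Quad) : PartComputable (sdL q) :=
  Partrec.nat_iff.mp (sdFn_computable q)

lemma setCode_inj : Function.Injective setCode := by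
  intro D D' h
  have h2 := Encodable.encode_injective h
  have h3 := congrArg List.toFinset h2
  rwa [Finset.sort_toFinset, Finset.sort_toFinset] at h3

lemma sdFn_code0 (q : Quad) : sdFn q (setCode {0}) = q.e0 := by simp [sdFn]

lemma sdFn_code1 (q : Quad) : sdFn q (setCode {1}) = q.e1 := by
  have h1 : setCode ({1} : Finset ℕ) ≠ setCode {0} :=
    fun h => absurd (setCode_inj h) (by decide)
  simp [sdFn, h1]

lemma sdFn_code01 (q : Quad) : sdFn q (setCode {0, 1}) = q.e01 := by
  have h1 : setCode ({0, 1} : Finset ℕ) ≠ setCode {0} :=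
    fun h => absurd (setCode_inj h) (by decide)
  have h2 : setCode ({0, 1} : Finset ℕ) ≠ setCode {1} :=
    fun h => absurd (setCode_inj h) (by decide)
  have h3 : setCode ({0, 1} : Finset ℕ) ≠ setCode ∅ :=
    fun h => absurd (setCode_inj h) (by decide)
  simp [sdFn, h1, h2, h3]

lemma sd_cindres (q : Quad) : OnAllTexts Sdop CIndRes (sdL q) := by
  intro T i e hie
  simp only [Sdop, sdL, Part.some_inj] at hie
  subst hie
  have : sdFn q (setCode (fincontent T i)) = q.e0 ∨ sdFn q (setCode (fincontent T i)) = q.e1 ∨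
      sdFn q (setCode (fincontent T i)) = q.eE ∨ sdFn q (setCode (fincontent T i)) = q.e01 := by
    unfold sdFn; split_ifs <;> simp
  rcases this with h | h | h | h <;> rw [h]
  exacts [q.cind0, q.cind1, q.cindE, q.cind01]

lemma mem_fincontent {T : Text} {n x : ℕ} :
    x ∈ fincontent T n ↔ ∃ m < n, T m = some x := by
  simp only [fincontent, initSeg, List.mem_toFinset, List.mem_filterMap, List.mem_map,
    List.mem_range, id]
  constructor
  · rintro ⟨o, ⟨m, hm, rfl⟩, ho⟩
    exact ⟨m, hm, ho⟩
  · rintro ⟨m, hm, hT⟩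
    exact ⟨T m, ⟨m, hm, rfl⟩, hT⟩

lemma fincontent_eventually {T : Text} {L : Finset ℕ} (hc : content T = ↑L) :
    ∃ N, ∀ n, N ≤ n → fincontent T n = L := by
  have h1 : ∀ x : ℕ, x ∈ L → ∃ m, T m = some x := by
    intro x hx
    have : x ∈ content T := by rw [hc]; exact_mod_cast hx
    exact this
  choose! g hg using h1
  refine ⟨L.sup g + 1, fun n hn => ?_⟩
  ext x
  rw [mem_fincontent]
  constructor
  · rintro ⟨m, _, hm⟩
    have : x ∈ content T := ⟨m, hm⟩
    rw [hc] at this; exact_mod_cast this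
  · intro hx
    exact ⟨g x, by have := Finset.le_sup (f := g) hx; omega, hg x hx⟩

lemma sd_learns0 (q : Quad) : Learns Sdop ExC (sdL q) {0} := by
  intro T hc
  obtain ⟨N, hN⟩ := fincontent_eventually (T := T) (L := {0}) (by rw [hc]; simp)
  refine ⟨N, ?_, q.e0, ?_, q.cind0, by rw [q.cset0, hc]⟩
  · intro n hn
    simp only [Sdop, sdL]
    rw [hN n hn, hN N le_rfl]
  · simp only [Sdop, sdL]
    rw [hN N le_rfl, sdFn_code0]

lemma sd_learns1 (q : Quad) : Learns Sdop ExC (sdL q) {1} := by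
  intro T hc
  obtain ⟨N, hN⟩ := fincontent_eventually (T := T) (L := {1}) (by rw [hc]; simp)
  refine ⟨N, ?_, q.e1, ?_, q.cind1, by rw [q.cset1, hc]⟩
  · intro n hn
    simp only [Sdop, sdL]
    rw [hN n hn, hN N le_rfl]
  · simp only [Sdop, sdL]
    rw [hN N le_rfl, sdFn_code1]

lemma sd_learns01 (q : Quad) : Learns Sdop ExC (sdL q) {0, 1} := by
  intro T hc
  obtain ⟨N, hN⟩ := fincontent_eventually (T := T) (L := {0, 1}) (by rw [hc]; simp)
  refine ⟨N, ?_, q.e01, ?_, q.cind01, by rw [q.cset01, hc]⟩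
  · intro n hn
    simp only [Sdop, sdL]
    rw [hN n hn, hN N le_rfl]
  · simp only [Sdop, sdL]
    rw [hN N le_rfl, sdFn_code01]

end AuxProof3

section AuxProof4

lemma td_step (h : Learner) (T : Text) (i k : ℕ)
    (hk : h (Encodable.encode (T i)) = Part.some (k + 1)) :
    Tdop h T (i + 1) = Part.some k := by
  show (h (Encodable.encode (T i))).bind _ = _
  rw [hk, Part.bind_some]

lemma td_none (h : Learner) (T : Text) (x : ℕ) (hx : ∀ n, T n = some x)
    (hno : ∀ k, h (Encodable.encode (some x : Option ℕ)) ≠ Part.some (k + 1)) :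
    ∀ n, Tdop h T n = Part.none := by
  intro n
  induction n with
  | zero => rfl
  | succ n ih =>
    show (h (Encodable.encode (T n))).bind _ = Part.none
    rw [hx n]
    by_cases hd : (h (Encodable.encode (some x : Option ℕ))).Dom
    · rw [← Part.some_get hd, Part.bind_some]
      rcases hk : (h (Encodable.encode (some x : Option ℕ))).get hd with _ | k
      · exact ih
      · exact absurd (by rw [← Part.some_get hd, hk]) (hno k)
    · rw [Part.eq_none_iff'.mpr hd]
      exact Part.bind_none _

lemma content_const (x : ℕ) : content (fun _ => some x) = {x} := by
  ext y
  simp [content, eq_comm]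

/-- Extraction of a hypothesis for a constant text from an `Ex_W`-learner. -/
lemma td_extract (h : Learner) (x : ℕ)
    (hE : ExW (Tdop h (fun _ => some x)) (fun _ => some x)) :
    ∃ k, h (Encodable.encode (some x : Option ℕ)) = Part.some (k + 1) ∧ Wset k = {x} := by
  obtain ⟨n₀, hconv, e, hpe, hW⟩ := hE
  by_cases hex : ∃ k, h (Encodable.encode (some x : Option ℕ)) = Part.some (k + 1)
  · obtain ⟨k, hk⟩ := hex
    have hstep : ∀ n, Tdop h (fun _ => some x) (n + 1) = Part.some k :=
      fun n => td_step h _ n k hk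
    cases n₀ with
    | zero => exact absurd hpe.symm (Part.some_ne_none e)
    | succ m =>
      have h1 := hstep m
      rw [hpe] at h1
      rw [content_const] at hW
      refine ⟨k, hk, ?_⟩
      rwa [← Part.some_inj.mp h1]
  · push_neg at hex
    have := td_none h (fun _ => some x) x (fun _ => rfl) hex n₀
    rw [hpe] at this
    exact absurd this.symm (Part.none_ne_some e)

lemma not_td_exW :
    ({{0}, {1}, {0, 1}} : Set (Set ℕ)) ∉ LearnableREC PartComputable Tdop ExW := by
  rintro ⟨-, h, -, hl⟩
  obtain ⟨k0, hk0, hW0⟩ := td_extract h 0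
    (hl {0} (by simp) (fun _ => some 0) (content_const 0))
  obtain ⟨k1, hk1, hW1⟩ := td_extract h 1
    (hl {1} (by simp) (fun _ => some 1) (content_const 1))
  set T01 : Text := fun n => some (n % 2) with hT01
  have hc01 : content T01 = {0, 1} := by
    ext y
    simp only [content, hT01, Option.some_inj, Set.mem_setOf_eq, Set.mem_insert_iff,
      Set.mem_singleton_iff]
    constructor
    · rintro ⟨n, rfl⟩; omega
    · rintro (rfl | rfl)
      exacts [⟨0, rfl⟩, ⟨1, rfl⟩]
  obtain ⟨n₀, hconv, e, hpe, hW⟩ := hl {0, 1} (by simp) T01 hc01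
  have hodd : Tdop h T01 (2 * n₀ + 1) = Part.some k0 := by
    refine td_step h T01 (2 * n₀) k0 ?_
    have : T01 (2 * n₀) = some 0 := by simp [hT01, Nat.mul_mod_right]
    rw [this, hk0]
  have heven : Tdop h T01 (2 * n₀ + 2) = Part.some k1 := by
    refine td_step h T01 (2 * n₀ + 1) k1 ?_
    have : T01 (2 * n₀ + 1) = some 1 := by
      simp only [hT01, Option.some_inj]
      omega
    rw [this, hk1]
  have h1 : Part.some k0 = Part.some e := by
    rw [← hodd, hconv _ (by omega), hpe]
  have h2 : Part.some k1 = Part.some e := by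
    rw [← heven, hconv _ (by omega), hpe]
  have hkk : k0 = k1 := Part.some_inj.mp (h1.trans h2.symm)
  rw [hkk, hW1] at hW0
  have : (0 : ℕ) ∈ ({1} : Set ℕ) := by rw [hW0]; rfl
  simp at this

lemma recclass : IsRecClass {{0}, {1}, {0, 1}} := by
  intro L hL
  simp only [Set.mem_insert_iff, Set.mem_singleton_iff] at hL
  rcases hL with rfl | rfl | rfl
  · exact ⟨fun x => decide (x = 0), (Primrec.eq.comp .id (.const 0)).decide.to_comp,
      fun x => by simp⟩
  · exact ⟨fun x => decide (x = 1), (Primrec.eq.comp .id (.const 1)).decide.to_comp,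
      fun x => by simp⟩
  · exact ⟨fun x => decide (x ≤ 1), (Primrec.nat_le.comp .id (.const 1)).decide.to_comp,
      fun x => by simp; omega⟩

end AuxProof4

/-- For `β ∈ {It, Sd}`: there is a class of recursive languages in
`[τ(CInd)TxtβEx_C]_REC` but not in `[TxtTdEx_W]_REC`. -/
theorem tau_cind_beta_not_td_exW (β : InteractionOp)
    (hβ : β = Itop ∨ β = Sdop) :
    ∃ ℒ : Set (Set ℕ),
      ℒ ∈ TauLearnableREC PartComputable CIndRes β ExC ∧
      ℒ ∉ LearnableREC PartComputable Tdop ExW := by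
  obtain ⟨q⟩ := quad_exists
  refine ⟨{{0}, {1}, {0, 1}}, ?_, not_td_exW⟩
  rcases hβ with rfl | rfl
  · refine ⟨recclass, itL q, itL_pc q, it_cindres q, ?_⟩
    intro L hL
    simp only [Set.mem_insert_iff, Set.mem_singleton_iff] at hL
    rcases hL with rfl | rfl | rfl
    exacts [it_learns0 q, it_learns1 q, it_learns01 q]
  · refine ⟨recclass, sdL q, sdL_pc q, sd_cindres q, ?_⟩
    intro L hL
    simp only [Set.mem_insert_iff, Set.mem_singleton_iff] at hL
    rcases hL with rfl | rfl | rfl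
    exacts [sd_learns0 q, sd_learns1 q, sd_learns01 q]

end InductiveInference
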